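/- Let A and B be real symmetric positive definite n×n matrices, let w be a unit eigenvector of R = A^(−1/2) B A^(−1/2) corresponding to its smallest eigenvalue, let β ≠ 0, and set Z* = β · A^(−1/2) w. Then Z* is Pareto optimal for the multi-objective problem of simultaneously maximizing ZᵀAZ and minimizing ZᵀBZ: there exists no Z ∈ ℝⁿ with ZᵀAZ ≥ Z*ᵀAZ* and ZᵀBZ < Z*ᵀBZ*. -/

import Mathlib

open Matrix

/-- Let `A`, `B` be real symmetric positive definite `n × n` matrices,
`S = A^(1/2)` (so `A^(−1/2) = S⁻¹`), `w` a unit eigenvector of `R = A^(−1/2) B A^(−1/2)`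
corresponding to its smallest eigenvalue `lmin`, `β ≠ 0`, and `Z⋆ = β · A^(−1/2) w`.
Then `Z⋆` is Pareto optimal for simultaneously maximizing `ZᵀAZ` and minimizing
`ZᵀBZ`: no `Z` satisfies `ZᵀAZ ≥ Z⋆ᵀAZ⋆` and `ZᵀBZ < Z⋆ᵀBZ⋆`. -/
theorem stmt_5 {n : ℕ} (A B : Matrix (Fin n) (Fin n) ℝ)
    (hA : A.PosDef) (hB : B.PosDef)
    (S : Matrix (Fin n) (Fin n) ℝ) (hS : S.PosDef) (hSA : S * S = A)
    (R : Matrix (Fin n) (Fin n) ℝ) (hR : R = S⁻¹ * B * S⁻¹)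
    (lmin : ℝ)
    (hlmin : IsLeast {μ : ℝ | ∃ v : Fin n → ℝ, v ≠ 0 ∧ R *ᵥ v = μ • v} lmin)
    (w : Fin n → ℝ) (hw : w ⬝ᵥ w = 1) (hweig : R *ᵥ w = lmin • w)
    (β : ℝ) (hβ : β ≠ 0)
    (Zs : Fin n → ℝ) (hZs : Zs = β • (S⁻¹ *ᵥ w)) :
    ¬ ∃ Z : Fin n → ℝ,
        Zs ⬝ᵥ (A *ᵥ Zs) ≤ Z ⬝ᵥ (A *ᵥ Z) ∧ Z ⬝ᵥ (B *ᵥ Z) < Zs ⬝ᵥ (B *ᵥ Zs) := by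
  rintro ⟨Z, hZA, hZB⟩
  have hdet : IsUnit S.det := isUnit_iff_ne_zero.2 hS.det_pos.ne'
  have hSinv : S * S⁻¹ = 1 := mul_nonsing_inv S hdet
  have hinvS : S⁻¹ * S = 1 := nonsing_inv_mul S hdet
  have hSiH : (S⁻¹).IsHermitian := hS.1.inv
  have hRH : R.IsHermitian := by
    rw [hR, Matrix.IsHermitian]
    simp only [conjTranspose_mul, hSiH.eq, hB.1.eq, Matrix.mul_assoc]
  -- symmetric dot product identity
  have dsym : ∀ (M : Matrix (Fin n) (Fin n) ℝ), M.IsHermitian →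
      ∀ x y : Fin n → ℝ, x ⬝ᵥ (M *ᵥ y) = (M *ᵥ x) ⬝ᵥ y := by
    intro M hM x y
    rw [dotProduct_mulVec, ← mulVec_transpose,
      ← Matrix.conjTranspose_eq_transpose_of_trivial, hM.eq]
  set y : Fin n → ℝ := S *ᵥ Z with hy
  have hZAy : Z ⬝ᵥ (A *ᵥ Z) = y ⬝ᵥ y := by
    rw [← hSA, ← mulVec_mulVec, dsym S hS.1]
  have hRy : R *ᵥ y = S⁻¹ *ᵥ (B *ᵥ Z) := by
    rw [hR, hy, mulVec_mulVec, Matrix.mul_assoc, hinvS, Matrix.mul_one, ← mulVec_mulVec]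
  have hZBy : Z ⬝ᵥ (B *ᵥ Z) = y ⬝ᵥ (R *ᵥ y) := by
    rw [hRy, dsym S⁻¹ hSiH, hy, mulVec_mulVec, hinvS, one_mulVec]
  -- values at Zs
  have hinvw : S *ᵥ (S⁻¹ *ᵥ w) = w := by
    rw [mulVec_mulVec, hSinv, one_mulVec]
  have hZsA : Zs ⬝ᵥ (A *ᵥ Zs) = β ^ 2 := by
    rw [hZs, ← hSA]
    rw [mulVec_smul, dotProduct_smul, smul_dotProduct, ← mulVec_mulVec, hinvw,
      ← dsym S⁻¹ hSiH, mulVec_mulVec, hinvS, one_mulVec, hw, smul_eq_mul, smul_eq_mul]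
    ring
  have hZsB : Zs ⬝ᵥ (B *ᵥ Zs) = β ^ 2 * lmin := by
    have hRw : S⁻¹ *ᵥ (B *ᵥ (S⁻¹ *ᵥ w)) = lmin • w := by
      rw [mulVec_mulVec, mulVec_mulVec, ← hR, hweig]
    rw [hZs, mulVec_smul, dotProduct_smul, smul_dotProduct,
      ← dsym S⁻¹ hSiH w _, hRw, dotProduct_smul, hw, smul_eq_mul, smul_eq_mul, smul_eq_mul]
    ring
  -- lmin > 0
  have hSiw : S⁻¹ *ᵥ w ≠ 0 := by
    intro h
    have : w = 0 := by rw [← hinvw, h, mulVec_zero]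
    rw [this] at hw; simp at hw
  have hlpos : 0 < lmin := by
    have h1 : w ⬝ᵥ (R *ᵥ w) = lmin := by
      rw [hweig, dotProduct_smul, hw, smul_eq_mul, mul_one]
    have h2 : w ⬝ᵥ (R *ᵥ w) = (S⁻¹ *ᵥ w) ⬝ᵥ (B *ᵥ (S⁻¹ *ᵥ w)) := by
      rw [hR, ← mulVec_mulVec, ← mulVec_mulVec, dsym S⁻¹ hSiH]
    have h3 := hB.dotProduct_mulVec_pos hSiw
    rw [star_trivial] at h3
    rw [h2] at h1
    linarith
  -- R - lmin • 1 is PSD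
  have hMH : (R - lmin • (1 : Matrix (Fin n) (Fin n) ℝ)).IsHermitian := by
    rw [Matrix.IsHermitian, conjTranspose_sub, conjTranspose_smul, conjTranspose_one, hRH.eq]
    norm_num
  have hpsd : (R - lmin • (1 : Matrix (Fin n) (Fin n) ℝ)).PosSemidef := by
    apply hMH.posSemidef_iff_eigenvalues_nonneg.mpr
    intro i
    have hvne : (⇑(hMH.eigenvectorBasis i) : Fin n → ℝ) ≠ 0 :=
      by simpa using hMH.eigenvectorBasis.orthonormal.ne_zero i
    have hv := hMH.mulVec_eigenvectorBasis i
    have hRv : R *ᵥ ⇑(hMH.eigenvectorBasis i)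
        = (hMH.eigenvalues i + lmin) • ⇑(hMH.eigenvectorBasis i) := by
      have hsub : (R - lmin • (1 : Matrix (Fin n) (Fin n) ℝ)) *ᵥ ⇑(hMH.eigenvectorBasis i)
          = R *ᵥ ⇑(hMH.eigenvectorBasis i) - lmin • ⇑(hMH.eigenvectorBasis i) := by
        rw [sub_mulVec, smul_mulVec, one_mulVec]
      rw [hsub] at hv
      rw [sub_eq_iff_eq_add] at hv
      rw [hv, add_smul]
    have hmem : hMH.eigenvalues i + lmin ∈
        {μ : ℝ | ∃ v : Fin n → ℝ, v ≠ 0 ∧ R *ᵥ v = μ • v} := ⟨_, hvne, hRv⟩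
    have := hlmin.2 hmem
    simp only [Pi.zero_apply]
    linarith
  -- Rayleigh bound
  have hray : lmin * (y ⬝ᵥ y) ≤ y ⬝ᵥ (R *ᵥ y) := by
    have h0 := hpsd.dotProduct_mulVec_nonneg y
    rw [star_trivial, sub_mulVec, smul_mulVec, one_mulVec,
      dotProduct_sub, dotProduct_smul, smul_eq_mul] at h0
    linarith
  rw [hZsA] at hZA
  rw [hZsB, hZBy] at hZB
  rw [hZAy] at hZA
  nlinarith [hray, mul_le_mul_of_nonneg_left hZA hlpos.le]
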